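/- A strongly connected component (with at least one edge) of a labeled directed graph is multiple-parity if and only if it contains a directed cycle of parity −1 (a negative feedback loop). -/
import Mathlib


inductive Reach {V : Type*} (E : Finset (V × V)) (w : V × V → ℤ) : V → V → ℤ → Prop
  | refl (u : V) : Reach E w u u 1
  | step {u v t : V} {x : ℤ} : Reach E w u v x → (v, t) ∈ E → Reach E w u t (x * w (v, t))

lemma Reach.trans {V : Type*} {E : Finset (V × V)} {w : V × V → ℤ} {a b c : V} {x y : ℤ}
    (h1 : Reach E w a b x) (h2 : Reach E w b c y) : Reach E w a c (x * y) := by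
  induction h2 with
  | refl => simpa using h1
  | step h he ih => rw [← mul_assoc]; exact Reach.step ih he

lemma Reach.sign {V : Type*} {E : Finset (V × V)} {w : V × V → ℤ}
    (hw : ∀ e ∈ E, w e = -1 ∨ w e = 1) {a b : V} {x : ℤ}
    (h : Reach E w a b x) : x = 1 ∨ x = -1 := by
  induction h with
  | refl => left; rfl
  | step h he ih =>
    rcases ih with h1 | h1 <;> rcases hw _ he with h2 | h2 <;> simp [h1, h2]

/-- A strongly connected component (with at least one edge) is multiple-parity
(every ordered pair of its vertices is connected within the component by paths of both
parities) iff it contains a directed cycle of parity `-1` (a negative feedback loop). -/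
theorem stmt_13 {V : Type*} [DecidableEq V] (E : Finset (V × V)) (w : V × V → ℤ)
    (hw : ∀ e ∈ E, w e = -1 ∨ w e = 1)
    (V₁ : Finset V)
    (E₁ : Finset (V × V)) (hE₁ : E₁ = E.filter (fun e => e.1 ∈ V₁ ∧ e.2 ∈ V₁))
    (hconn : ∀ a ∈ V₁, ∀ b ∈ V₁, ∃ x : ℤ, Reach E₁ w a b x)
    (hedge : E₁.Nonempty) :
    (∀ a ∈ V₁, ∀ b ∈ V₁, Reach E₁ w a b 1 ∧ Reach E₁ w a b (-1)) ↔
      (∃ u ∈ V₁, Reach E₁ w u u (-1)) := by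
  have hw₁ : ∀ e ∈ E₁, w e = -1 ∨ w e = 1 := by
    intro e he
    rw [hE₁, Finset.mem_filter] at he
    exact hw e he.1
  constructor
  · intro h
    obtain ⟨⟨a, b⟩, he⟩ := hedge
    have ha : a ∈ V₁ := by
      have := he; rw [hE₁, Finset.mem_filter] at this; exact this.2.1
    exact ⟨a, ha, (h a ha a ha).2⟩
  · rintro ⟨u, hu, hneg⟩ a ha b hb
    obtain ⟨x, hx⟩ := hconn a ha u hu
    obtain ⟨y, hy⟩ := hconn u hu b hb
    have hxy := hx.trans hy
    have hxyneg : Reach E₁ w a b (x * (-1) * y) := (hx.trans hneg).trans hy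
    rcases (hxy.sign hw₁) with h1 | h1
    · refine ⟨h1 ▸ hxy, ?_⟩
      have : x * (-1) * y = -1 := by rw [mul_comm x (-1), mul_assoc, h1]; ring
      exact this ▸ hxyneg
    · refine ⟨?_, h1 ▸ hxy⟩
      have : x * (-1) * y = 1 := by rw [mul_comm x (-1), mul_assoc, h1]; ring
      exact this ▸ hxyneg
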